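/- arXiv:1712.02255 — 5 statements merged into one kernel-verified Lean document; each statement's English description precedes it below -/
import Mathlib

section
/- For every real number w > 0 with w ≠ 1, one has w/(1-w)^2 - 1/(log w)^2 = 2 · ∑_{n=1}^∞ ((log w)^2 - 4π²n²)/((log w)^2 + 4π²n²)². -/
open Real

namespace ZetaAuxProof

open Complex MeasureTheory intervalIntegral AddCircle

/-- product of conjugate linear factors -/
lemma conj_mul (L b : ℝ) :
    ((L : ℂ) - b * Complex.I) * ((L : ℂ) + b * Complex.I) = ((L ^ 2 + b ^ 2 : ℝ) : ℂ) := by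
  push_cast
  linear_combination (-(b : ℂ) ^ 2) * Complex.I_sq

lemma factor_ne_left (L b : ℝ) (hD : L ^ 2 + b ^ 2 ≠ 0) : ((L : ℂ) - b * Complex.I) ≠ 0 := by
  intro h
  apply hD
  have h2 := conj_mul L b
  rw [h, zero_mul] at h2
  exact_mod_cast h2.symm

lemma factor_ne_right (L b : ℝ) (hD : L ^ 2 + b ^ 2 ≠ 0) : ((L : ℂ) + b * Complex.I) ≠ 0 := by
  intro h
  apply hD
  have h2 := conj_mul L b
  rw [h, mul_zero] at h2
  exact_mod_cast h2.symm

lemma pair_eq (L b : ℝ) (hD : L ^ 2 + b ^ 2 ≠ 0) :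
    1 / ((L : ℂ) - b * Complex.I) ^ 2 + 1 / ((L : ℂ) + b * Complex.I) ^ 2 =
      ((2 * (L ^ 2 - b ^ 2) / (L ^ 2 + b ^ 2) ^ 2 : ℝ) : ℂ) := by
  have hA := factor_ne_left L b hD
  have hB := factor_ne_right L b hD
  have hsq : (((L : ℂ) - b * Complex.I) ^ 2) * (((L : ℂ) + b * Complex.I) ^ 2)
      = ((L ^ 2 + b ^ 2 : ℝ) : ℂ) ^ 2 := by
    rw [← mul_pow, conj_mul]
  have hsum : ((L : ℂ) - b * Complex.I) ^ 2 + ((L : ℂ) + b * Complex.I) ^ 2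
      = ((2 * (L ^ 2 - b ^ 2) : ℝ) : ℂ) := by
    push_cast
    linear_combination (2 * (b : ℂ) ^ 2) * Complex.I_sq
  rw [div_add_div _ _ (pow_ne_zero 2 hA) (pow_ne_zero 2 hB), one_mul, mul_one, hsq]
  rw [add_comm] at hsum
  rw [hsum]
  push_cast
  ring

lemma value_eq (cc ww ss : ℂ) (hss : ss ≠ 0) (h : cc * (1 - ww) = ww) :
    ((cc + 1) / ss - 1 / ss ^ 2) * ww - (cc / ss - 1 / ss ^ 2) = (1 - ww) / ss ^ 2 := by
  field_simp
  linear_combination (-ss) * h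

/-- Integral of `(c+x) e^{s x}` over `[0,1]`. -/
lemma integral_linear_mul_exp (c s : ℂ) (hs : s ≠ 0) :
    ∫ x in (0:ℝ)..1, (c + x) * Complex.exp (s * x)
      = ((c + 1) / s - 1 / s ^ 2) * Complex.exp s - (c / s - 1 / s ^ 2) := by
  have hderiv : ∀ x ∈ Set.uIcc (0:ℝ) 1,
      HasDerivAt (fun y : ℝ => ((c + y) / s - 1 / s ^ 2) * Complex.exp (s * y))
        ((c + x) * Complex.exp (s * x)) x := by
    intro x _
    have h1 : HasDerivAt (fun z : ℂ => (c + z) / s - 1 / s ^ 2) (1 / s) x := by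
      have h := (((hasDerivAt_id ((x:ℝ) : ℂ)).const_add c).div_const s).sub_const (1 / s ^ 2)
      simpa using h
    have h2 : HasDerivAt (fun z : ℂ => Complex.exp (s * z)) (Complex.exp (s * x) * s) x := by
      simpa [Function.comp_def] using (Complex.hasDerivAt_exp (s * x)).comp (x : ℂ)
        ((hasDerivAt_id (x : ℂ)).const_mul s)
    have h3 := (h1.mul h2).comp_ofReal (z := x)
    convert h3 using 1
    · rfl
    field_simp
    ring
  have hint : IntervalIntegrable (fun x : ℝ => (c + x) * Complex.exp (s * x))
      MeasureTheory.volume 0 1 := by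
    apply Continuous.intervalIntegrable
    fun_prop
  have := intervalIntegral.integral_eq_sub_of_hasDerivAt hderiv hint
  rw [this]
  simp only [Complex.ofReal_one, Complex.ofReal_zero, mul_one, mul_zero, Complex.exp_zero]
  ring

end ZetaAuxProof

theorem zeta_series_identity (w : ℝ) (hw : 0 < w) (hw1 : w ≠ 1) :
    w / (1 - w) ^ 2 - 1 / (Real.log w) ^ 2 =
      2 * ∑' n : ℕ, ((Real.log w) ^ 2 - 4 * π ^ 2 * ((n : ℝ) + 1) ^ 2) /
        ((Real.log w) ^ 2 + 4 * π ^ 2 * ((n : ℝ) + 1) ^ 2) ^ 2 := by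
  classical
  haveI : Fact ((0:ℝ) < 1) := ⟨zero_lt_one⟩
  set L : ℝ := Real.log w with hLdef
  have hL0 : L ≠ 0 := by
    intro h
    rcases Real.log_eq_zero.mp h with h' | h' | h'
    · exact hw.ne' h'
    · exact hw1 h'
    · linarith
  have h1w : (1:ℝ) - w ≠ 0 := sub_ne_zero.mpr (Ne.symm hw1)
  set c : ℝ := w / (1 - w) with hcdef
  have hc : c * (1 - w) = w := div_mul_cancel₀ w h1w
  -- the function and its periodization
  set g : ℝ → ℂ := fun x => ((c : ℂ) + x) * Complex.exp ((L : ℂ) * x) with hgdef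
  have hg_cont : Continuous g := by fun_prop
  have hexpL : Complex.exp (L : ℂ) = (w : ℂ) := by
    rw [← Complex.ofReal_exp, hLdef, Real.exp_log hw]
  have hg_end : g 0 = g (0 + 1) := by
    simp only [hgdef, Complex.ofReal_zero, Complex.ofReal_one, zero_add, mul_zero, mul_one,
      Complex.exp_zero, add_zero]
    rw [hexpL]
    have hcC : (c : ℂ) * (1 - (w : ℂ)) = (w : ℂ) := by exact_mod_cast hc
    linear_combination hcC
  set f : C(AddCircle 1, ℂ) :=
    ⟨AddCircle.liftIco 1 0 g, AddCircle.liftIco_continuous hg_end hg_cont.continuousOn⟩ with hfdef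
  -- the factors
  set s : ℤ → ℂ := fun n => (L : ℂ) - ((2 * π * (n : ℝ) : ℝ) : ℂ) * Complex.I with hsdef
  have hD : ∀ n : ℤ, L ^ 2 + (2 * π * (n : ℝ)) ^ 2 ≠ 0 := by
    intro n
    have h1 : 0 < L ^ 2 := by positivity
    have h2 : 0 ≤ (2 * π * (n : ℝ)) ^ 2 := sq_nonneg _
    nlinarith
  have hs_ne : ∀ n : ℤ, s n ≠ 0 := fun n =>
    ZetaAuxProof.factor_ne_left L (2 * π * (n : ℝ)) (hD n)
  set F : ℤ → ℂ := fun n => ((1 - w : ℝ) : ℂ) / (s n) ^ 2 with hFdef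
  -- Fourier coefficients
  have hcC : (c : ℂ) * (1 - (w : ℂ)) = (w : ℂ) := by exact_mod_cast hc
  have key : ∀ n : ℤ, fourierCoeff (⇑f) n = F n := by
    intro n
    have hsn := hs_ne n
    have hexps : Complex.exp (s n) = (w : ℂ) := by
      have harg : s n = (L : ℂ) + (-n : ℤ) * (2 * (π : ℂ) * Complex.I) := by
        simp only [hsdef]; push_cast; ring
      rw [harg, Complex.exp_add, Complex.exp_int_mul_two_pi_mul_I, mul_one, hexpL]
    have hcoe : (⇑f : AddCircle (1:ℝ) → ℂ) = AddCircle.liftIco 1 0 g := rfl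
    rw [hcoe, fourierCoeff_liftIco_eq g n, fourierCoeffOn_eq_integral]
    have hEq : Set.EqOn (fun x : ℝ => fourier (-n) (x : AddCircle ((0:ℝ) + 1 - 0)) • g x)
        (fun x : ℝ => ((c : ℂ) + x) * Complex.exp (s n * x)) (Set.uIcc 0 (0 + 1)) := by
      intro x _
      have h01 : ((0:ℝ) + 1 - 0) = (1:ℝ) := by norm_num
      simp only [smul_eq_mul, h01, fourier_coe_apply, hgdef, hsdef]
      rw [mul_comm, mul_assoc, ← Complex.exp_add]
      congr 1
      push_cast
      field_simp
      ring
    rw [intervalIntegral.integral_congr hEq]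
    norm_num
    rw [ZetaAuxProof.integral_linear_mul_exp _ _ hsn, hexps,
      ZetaAuxProof.value_eq _ _ _ hsn hcC]
    simp only [hFdef]
    push_cast
    ring
  -- summability
  have hFsummable : Summable F := by
    have hnorm : ∀ n : ℤ, ‖F n‖ = |1 - w| / (L ^ 2 + (2 * π * (n : ℝ)) ^ 2) := by
      intro n
      simp only [hFdef]
      rw [norm_div, norm_pow, Complex.norm_real, Real.norm_eq_abs]
      congr 1
      have hre : (s n).re = L := by simp [hsdef]
      have him : (s n).im = -(2 * π * (n : ℝ)) := by simp [hsdef]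
      rw [Complex.sq_norm, Complex.normSq_apply, hre, him]
      ring
    apply Summable.of_norm_bounded_eventually (g := fun n : ℤ => |1 - w| / (4 * π ^ 2) * (1 / (n : ℝ) ^ 2))
    · exact (summable_one_div_int_pow.mpr one_lt_two).mul_left _
    · rw [Filter.eventually_cofinite]
      apply Set.Finite.subset (Set.finite_singleton (0 : ℤ))
      intro n hn
      simp only [Set.mem_setOf_eq, not_le] at hn
      simp only [Set.mem_singleton_iff]
      by_contra hne
      refine absurd ?_ (not_le.mpr hn)
      have hnR : (n : ℝ) ≠ 0 := Int.cast_ne_zero.mpr hne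
      rw [hnorm n]
      have h4 : |1 - w| / (4 * π ^ 2) * (1 / (n : ℝ) ^ 2) = |1 - w| / (4 * π ^ 2 * (n : ℝ) ^ 2) := by
        ring
      rw [h4]
      have hpos : 0 < 4 * π ^ 2 * (n : ℝ) ^ 2 := by positivity
      apply div_le_div_of_nonneg_left (abs_nonneg _) hpos
      nlinarith [sq_nonneg L]
  have hsum : Summable (fourierCoeff (⇑f)) := by
    rw [funext key]; exact hFsummable
  -- pointwise Fourier series at 0
  have H0 := has_pointwise_sum_fourier_series_of_summable hsum (0 : AddCircle (1:ℝ))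
  simp only [fourier_eval_zero, smul_eq_mul, mul_one] at H0
  have hf0 : f (0 : AddCircle (1:ℝ)) = (c : ℂ) := by
    have h00 : ((0 : ℝ) : AddCircle (1:ℝ)) = (0 : AddCircle (1:ℝ)) := rfl
    have := AddCircle.liftIco_coe_apply (f := g) (p := (1:ℝ)) (a := (0:ℝ))
      (x := (0:ℝ)) (by simp)
    rw [h00] at this
    rw [hfdef]
    show AddCircle.liftIco 1 0 g 0 = (c : ℂ)
    rw [this]
    simp [hgdef]
  rw [funext key, hf0] at H0
  -- rearrange the integer sum
  have H2 := H0.nat_add_neg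
  have H3 := (hasSum_nat_add_iff' 1).2 H2
  have H4 := H3.mul_left (((1 - w : ℝ) : ℂ))⁻¹
  have hF0 : F 0 = ((1 - w : ℝ) : ℂ) / ((L : ℂ)) ^ 2 := by
    simp [hFdef, hsdef]
  -- identify the sum value
  have hval : (((1 - w : ℝ) : ℂ))⁻¹ * ((c : ℂ) + F 0 -
      ∑ i ∈ Finset.range 1, (F i + F (-(i : ℤ)))) =
      ((w / (1 - w) ^ 2 - 1 / L ^ 2 : ℝ) : ℂ) := by
    have hL0C : (L : ℂ) ≠ 0 := Complex.ofReal_ne_zero.mpr hL0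
    have h1wC : (1 : ℂ) - (w : ℂ) ≠ 0 := by
      intro h
      apply h1w
      have : ((1 - w : ℝ) : ℂ) = 0 := by push_cast; exact h
      exact_mod_cast this
    simp only [Finset.sum_range_one, Nat.cast_zero, neg_zero, hF0]
    rw [hcdef]
    push_cast
    field_simp [h1wC, hL0C]
    ring
  -- identify the terms
  have hterm : ∀ n : ℕ, (((1 - w : ℝ) : ℂ))⁻¹ * (F ((n : ℤ) + 1) + F (-((n : ℤ) + 1))) =
      ((2 * ((L ^ 2 - 4 * π ^ 2 * ((n : ℝ) + 1) ^ 2) /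
        (L ^ 2 + 4 * π ^ 2 * ((n : ℝ) + 1) ^ 2) ^ 2) : ℝ) : ℂ) := by
    intro n
    have h1wC : ((1 - w : ℝ) : ℂ) ≠ 0 := Complex.ofReal_ne_zero.mpr h1w
    have hb : L ^ 2 + (2 * π * ((n : ℝ) + 1)) ^ 2 ≠ 0 := by
      have h1 : 0 < L ^ 2 := by positivity
      nlinarith [sq_nonneg (2 * π * ((n : ℝ) + 1))]
    have hpair := ZetaAuxProof.pair_eq L (2 * π * ((n : ℝ) + 1)) hb
    have e : F ((n : ℤ) + 1) + F (-((n : ℤ) + 1)) =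
        ((1 - w : ℝ) : ℂ) * (1 / ((L : ℂ) - ((2 * π * ((n : ℝ) + 1) : ℝ) : ℂ) * Complex.I) ^ 2 +
          1 / ((L : ℂ) + ((2 * π * ((n : ℝ) + 1) : ℝ) : ℂ) * Complex.I) ^ 2) := by
      simp only [hFdef, hsdef]
      push_cast
      ring
    rw [e, hpair, inv_mul_cancel_left₀ h1wC]
    rw [Complex.ofReal_inj]
    ring
  rw [hval] at H4
  have hterm' : ∀ n : ℕ, (((1 - w : ℝ) : ℂ))⁻¹ * (F ((n + 1 : ℕ) : ℤ) + F (-((n + 1 : ℕ) : ℤ))) =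
      ((2 * ((L ^ 2 - 4 * π ^ 2 * ((n : ℝ) + 1) ^ 2) /
        (L ^ 2 + 4 * π ^ 2 * ((n : ℝ) + 1) ^ 2) ^ 2) : ℝ) : ℂ) := by
    intro n
    have := hterm n
    push_cast at this ⊢
    exact this
  simp only [hterm'] at H4
  have H5 : HasSum (fun n : ℕ => (2 * ((L ^ 2 - 4 * π ^ 2 * ((n : ℝ) + 1) ^ 2) /
      (L ^ 2 + 4 * π ^ 2 * ((n : ℝ) + 1) ^ 2) ^ 2) : ℝ))
      (w / (1 - w) ^ 2 - 1 / L ^ 2) := Complex.hasSum_ofReal.mp H4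
  have := H5.tsum_eq
  rw [tsum_mul_left] at this
  linarith [this]
end

section
/- For every natural number m ≥ 1 and every real c > 0, the 2m-th derivative at x = 0 of the function x ↦ (x² - c)/(x² + c)² equals (-1)^{m+1} · (2m+1)! / c^{m+1}. -/
open Real

noncomputable def aCoeff (c : ℝ) : ℕ → ℝ := fun n =>
  if n % 2 = 0 then (-1) ^ (n / 2 + 1) * (2 * (n / 2) + 1) / c ^ (n / 2 + 1) else 0

lemma aCoeff_even (c : ℝ) (k : ℕ) :
    aCoeff c (2 * k) = (-1) ^ (k + 1) * (2 * k + 1) / c ^ (k + 1) := by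
  simp [aCoeff, Nat.mul_mod_right, Nat.mul_div_cancel_left _ (by norm_num : 0 < 2)]

lemma aCoeff_odd (c : ℝ) (n : ℕ) (hn : n % 2 ≠ 0) : aCoeff c n = 0 := by
  simp [aCoeff, hn]

lemma hasSumAux (q : ℝ) (hq : |q| < 1) :
    HasSum (fun k : ℕ => (2 * k + 1 : ℝ) * q ^ k) ((1 + q) / (1 - q) ^ 2) := by
  have hq' : ‖q‖ < 1 := by simpa using hq
  have h1 : HasSum (fun k : ℕ => (k : ℝ) * q ^ k) (q / (1 - q) ^ 2) :=
    hasSum_coe_mul_geometric_of_norm_lt_one hq'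
  have h2 : HasSum (fun k : ℕ => q ^ k) (1 - q)⁻¹ :=
    hasSum_geometric_of_norm_lt_one hq'
  have := (h1.mul_left 2).add h2
  have hne : (1 : ℝ) - q ≠ 0 := by
    intro h
    rw [sub_eq_zero] at h
    rw [← h] at hq
    simp at hq
  convert this using 1
  · rfl
  · funext k; ring
  · field_simp
    ring

lemma two_mul_injective : Function.Injective (fun k : ℕ => 2 * k) := by
  intro a b h
  simp only at h
  omega

lemma hasSum_h (c : ℝ) (hc : 0 < c) (y : ℝ) (hy : y ^ 2 < c) :
    HasSum (fun n : ℕ => aCoeff c n * y ^ n) ((y ^ 2 - c) / (y ^ 2 + c) ^ 2) := by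
  set t : ℝ := -(y ^ 2 / c) with ht
  have hy2 : (0:ℝ) ≤ y ^ 2 := sq_nonneg y
  have htlt : |t| < 1 := by
    rw [ht, abs_neg, abs_div, abs_of_nonneg hy2, abs_of_pos hc]
    rw [div_lt_one hc]; exact hy
  have H := (hasSumAux t htlt).mul_left (-(1 / c))
  have hcne : c ≠ 0 := ne_of_gt hc
  have hsum : y ^ 2 + c ≠ 0 := by positivity
  have h1t : (1 : ℝ) - t = (y ^ 2 + c) / c := by
    rw [ht]; field_simp; ring
  have h1t' : (1 : ℝ) + t = (c - y ^ 2) / c := by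
    rw [ht]; field_simp; ring
  have Hval : -(1 / c) * ((1 + t) / (1 - t) ^ 2) = (y ^ 2 - c) / (y ^ 2 + c) ^ 2 := by
    rw [h1t, h1t']
    field_simp
    ring
  rw [Hval] at H
  have Hfun : (fun k : ℕ => -(1 / c) * ((2 * k + 1 : ℝ) * t ^ k)) =
      (fun n : ℕ => aCoeff c n * y ^ n) ∘ (fun k : ℕ => 2 * k) := by
    funext k
    have htk : t ^ k = (-1) ^ k * y ^ (2 * k) / c ^ k := by
      rw [ht, neg_pow, div_pow, ← pow_mul, mul_div_assoc]
    simp only [Function.comp_apply, aCoeff_even]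
    rw [htk]
    field_simp
    ring
  rw [Hfun] at H
  exact (two_mul_injective.hasSum_iff (fun n hn => by
    have : n % 2 ≠ 0 := by
      intro h
      exact hn ⟨n / 2, by simp only []; omega⟩
    rw [aCoeff_odd c n this, zero_mul])).mp H

lemma summable_abs_aCoeff (c : ℝ) (hc : 0 < c) (r : ℝ) (hr0 : 0 ≤ r) (hr : r ^ 2 < c) :
    Summable (fun n : ℕ => |aCoeff c n| * r ^ n) := by
  have hq : |r ^ 2 / c| < 1 := by
    rw [abs_of_nonneg (by positivity), div_lt_one hc]; exact hr
  have H := ((hasSumAux (r ^ 2 / c) hq).mul_left (1 / c)).summable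
  have Hfun : (fun k : ℕ => 1 / c * ((2 * k + 1 : ℝ) * (r ^ 2 / c) ^ k)) =
      (fun n : ℕ => |aCoeff c n| * r ^ n) ∘ (fun k : ℕ => 2 * k) := by
    funext k
    simp only [Function.comp_apply, aCoeff_even]
    rw [abs_div, abs_mul, abs_pow, abs_neg, abs_one, one_pow, one_mul,
      abs_of_nonneg (by positivity : (0:ℝ) ≤ (2 * (k:ℝ) + 1)),
      abs_of_pos (by positivity : (0:ℝ) < c ^ (k + 1)), div_pow, pow_mul, pow_succ]
    rw [div_mul_eq_mul_div, one_mul, div_mul_eq_mul_div, mul_div_assoc, div_div]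
    ring
  rw [Hfun] at H
  exact (two_mul_injective.summable_iff (fun n hn => by
    have : n % 2 ≠ 0 := by
      intro h
      exact hn ⟨n / 2, by simp only []; omega⟩
    rw [aCoeff_odd c n this, abs_zero, zero_mul])).mp H

lemma hasFPowerSeries_h (c : ℝ) (hc : 0 < c) :
    HasFPowerSeriesOnBall (fun x : ℝ => (x ^ 2 - c) / (x ^ 2 + c) ^ 2)
      (FormalMultilinearSeries.ofScalars ℝ (aCoeff c)) 0
      (ENNReal.ofReal (Real.sqrt c / 2)) := by
  have hsqrt : 0 < Real.sqrt c := Real.sqrt_pos.mpr hc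
  have hrpos : 0 < Real.sqrt c / 2 := by positivity
  have hrsq : (Real.sqrt c / 2) ^ 2 < c := by
    have : (Real.sqrt c) ^ 2 = c := Real.sq_sqrt hc.le
    nlinarith
  constructor
  · -- r ≤ radius
    have := FormalMultilinearSeries.le_radius_of_summable
      (FormalMultilinearSeries.ofScalars ℝ (aCoeff c)) (r := (Real.sqrt c / 2).toNNReal) ?_
    · exact this
    · have := summable_abs_aCoeff c hc (Real.sqrt c / 2) hrpos.le hrsq
      convert this using 2 with n
      rw [FormalMultilinearSeries.ofScalars_norm]
      simp [Real.coe_toNNReal _ hrpos.le, Real.norm_eq_abs]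
  · exact ENNReal.ofReal_pos.mpr hrpos
  · intro y hy
    rw [EMetric.mem_ball, edist_zero_right, ← ofReal_norm,
      ENNReal.ofReal_lt_ofReal_iff hrpos] at hy
    have hy2 : y ^ 2 < c := by
      have h1 : |y| < Real.sqrt c / 2 := by simpa [Real.norm_eq_abs] using hy
      have h2 : |y| < Real.sqrt c := lt_of_lt_of_le h1 (by linarith)
      calc y ^ 2 = |y| ^ 2 := (sq_abs y).symm
        _ < (Real.sqrt c) ^ 2 := by
            exact pow_lt_pow_left₀ h2 (abs_nonneg y) (by norm_num)
        _ = c := Real.sq_sqrt hc.le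
    have := hasSum_h c hc y hy2
    simp only [zero_add]
    convert this using 2 with n
    · rfl
    rw [FormalMultilinearSeries.ofScalars_apply_eq]; simp [smul_eq_mul]

theorem iteratedDeriv_h (m : ℕ) (hm : 1 ≤ m) (c : ℝ) (hc : 0 < c) :
    iteratedDeriv (2 * m) (fun x : ℝ => (x ^ 2 - c) / (x ^ 2 + c) ^ 2) 0 =
      (-1) ^ (m + 1) * ((2 * m + 1).factorial : ℝ) / c ^ (m + 1) := by
  have H := (hasFPowerSeries_h c hc).factorial_smul (1 : ℝ) (2 * m)
  rw [FormalMultilinearSeries.ofScalars_apply_eq] at H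
  rw [iteratedDeriv_eq_iteratedFDeriv, ← H, aCoeff_even]
  have hfac : ((2 * m + 1).factorial : ℝ) = (2 * m + 1) * ((2 * m).factorial : ℝ) := by
    rw [Nat.factorial_succ]; push_cast; ring
  rw [smul_eq_mul] at *
  have hcne : c ^ (m + 1) ≠ 0 := by positivity
  rw [hfac]
  rw [nsmul_eq_mul]
  push_cast
  field_simp
  ring
end

section
/- In a neighborhood of z = 0, the function z ↦ e^{2πz}/(e^{2πz} - 1)² - 1/(2πz)² (extended by its removable singularity at 0) has Taylor expansion -∑_{k=0}^∞ B_{k+2} (2π)^k z^k / (k! · (k+2)), where B_j are the Bernoulli numbers. -/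
open Finset PowerSeries

lemma two_pow_le_fact (m : ℕ) : (2:ℚ)^m ≤ (m+1).factorial := by
  induction m with
  | zero => simp
  | succ m ih =>
    rw [pow_succ, Nat.factorial_succ]
    push_cast
    have h2 : (2:ℚ) ≤ (m:ℚ)+1+1 := by
      have : (0:ℚ) ≤ m := Nat.cast_nonneg m
      linarith
    have hf : (0:ℚ) ≤ ((m+1).factorial : ℚ) := by positivity
    nlinarith [ih]

lemma bern_abs_le (n : ℕ) : |(bernoulli n : ℚ)| ≤ n.factorial := by
  induction n using Nat.strong_induction_on with
  | _ n ih =>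
    match n with
    | 0 => simp
    | 1 => rw [bernoulli_one]; rw [abs_of_nonpos (by norm_num)]; norm_num
    | (m+2) =>
      set n := m + 2 with hn
      have hrec := sum_bernoulli (n+1)
      rw [if_neg (by omega), Finset.sum_range_succ, Nat.choose_succ_self_right] at hrec
      have hB : ((n:ℚ)+1) * bernoulli n = -∑ k ∈ range n, ((n+1).choose k : ℚ) * bernoulli k := by
        push_cast at hrec ⊢; linarith [hrec]
      have habs : |((n:ℚ)+1) * bernoulli n| ≤ ∑ k ∈ range n, ((n+1).choose k : ℚ) * k.factorial := by
        rw [hB, abs_neg]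
        refine (Finset.abs_sum_le_sum_abs _ _).trans ?_
        refine Finset.sum_le_sum fun k hk => ?_
        rw [abs_mul, abs_of_nonneg (by positivity)]
        exact mul_le_mul_of_nonneg_left (ih k (Finset.mem_range.mp hk |>.trans_le (by omega))) (by positivity)
      -- bound each term: C(n+1,k) k! = (n+1)!/(n+1-k)!  ≤ (n+1)! / 2^(n-k)
      have hterm : ∀ k ∈ range n, ((n+1).choose k : ℚ) * k.factorial ≤ ((n+1).factorial : ℚ) * (1/2)^(n-k) := by
        intro k hk
        have hk' : k < n := Finset.mem_range.mp hk
        have hfac : ((n+1).choose k : ℚ) * k.factorial * (n+1-k).factorial = (n+1).factorial := by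
          have := Nat.choose_mul_factorial_mul_factorial (show k ≤ n+1 by omega)
          exact_mod_cast congrArg (Nat.cast : ℕ → ℚ) this
        have h2 : (2:ℚ)^(n-k) ≤ (n+1-k).factorial := by
          have : n+1-k = (n-k)+1 := by omega
          rw [this]; exact two_pow_le_fact _
        have hpos : (0:ℚ) < (n+1-k).factorial := by positivity
        have hnn : (0:ℚ) ≤ ((n+1).choose k : ℚ) * k.factorial := by positivity
        rw [div_pow, one_pow]
        calc ((n+1).choose k : ℚ) * k.factorial
            = (((n+1).choose k : ℚ) * k.factorial * (n+1-k).factorial) * (1/(n+1-k).factorial) := by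
              field_simp
          _ ≤ (((n+1).choose k : ℚ) * k.factorial * (n+1-k).factorial) * (1/2^(n-k)) := by
              refine mul_le_mul_of_nonneg_left ?_ (by positivity)
              apply one_div_le_one_div_of_le (by positivity) h2
          _ = ((n+1).factorial : ℚ) * (1/2^(n-k)) := by rw [hfac]
      have hsum : ∑ k ∈ range n, ((n+1).factorial : ℚ) * (1/2)^(n-k) ≤ (n+1).factorial := by
        rw [← Finset.mul_sum]
        have : ∑ k ∈ range n, ((1:ℚ)/2)^(n-k) ≤ 1 := by
          rw [← Finset.sum_range_reflect]
          have heq : ∀ j ∈ range n, ((1:ℚ)/2)^(n-(n-1-j)) = ((1:ℚ)/2)^j * (1/2) := by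
            intro j hj
            have hj' : j < n := Finset.mem_range.mp hj
            have : n - (n-1-j) = j + 1 := by omega
            rw [this, pow_succ]
          rw [Finset.sum_congr rfl heq, ← Finset.sum_mul, geom_sum_eq (by norm_num)]
          have hp : (0:ℚ) < ((1:ℚ)/2)^n := by positivity
          norm_num
          linarith
        calc ((n+1).factorial : ℚ) * ∑ k ∈ range n, ((1:ℚ)/2)^(n-k)
            ≤ ((n+1).factorial : ℚ) * 1 := mul_le_mul_of_nonneg_left this (by positivity)
          _ = _ := mul_one _
      have h1 : |((n:ℚ)+1) * bernoulli n| = ((n:ℚ)+1) * |bernoulli n| := by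
        rw [abs_mul, abs_of_nonneg (by positivity)]
      have hfin : ((n:ℚ)+1) * |bernoulli n| ≤ (n+1).factorial := by
        rw [← h1]
        refine habs.trans ((Finset.sum_le_sum hterm).trans hsum)
      have : ((n+1).factorial : ℚ) = ((n:ℚ)+1) * n.factorial := by
        rw [Nat.factorial_succ]; push_cast; ring
      rw [this] at hfin
      have hpos : (0:ℚ) < (n:ℚ)+1 := by positivity
      exact le_of_mul_le_mul_left hfin hpos


noncomputable def Eq1 : PowerSeries ℚ := PowerSeries.exp ℚ
noncomputable def Bq : PowerSeries ℚ := bernoulliPowerSeries ℚ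
noncomputable def Cq : PowerSeries ℚ := Bq - PowerSeries.X * (d⁄dX ℚ Bq)

lemma deriv_exp_q : d⁄dX ℚ Eq1 = Eq1 := by
  ext n
  rw [PowerSeries.coeff_derivative, Eq1, PowerSeries.coeff_exp, PowerSeries.coeff_exp]
  simp only [Algebra.algebraMap_self, RingHom.id_apply] -- maybe wrong
  rw [Nat.factorial_succ]
  push_cast
  have h1 : ((n:ℚ)+1) ≠ 0 := by positivity
  have h2 : ((n.factorial :ℚ)) ≠ 0 := by positivity
  field_simp

lemma formal_main : (Eq1 - 1)^2 * Cq = PowerSeries.X^2 * Eq1 := by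
  have h1 : Bq * (Eq1 - 1) = PowerSeries.X := bernoulliPowerSeries_mul_exp_sub_one ℚ
  have h3 : Bq * Eq1 + (Eq1 - 1) * (d⁄dX ℚ Bq) = 1 := by
    have := congrArg (d⁄dX ℚ) h1
    rw [Derivation.leibniz, map_sub, deriv_exp_q, PowerSeries.derivative_X] at this
    rw [smul_eq_mul, smul_eq_mul] at this
    have h0 : d⁄dX ℚ (1 : PowerSeries ℚ) = 0 := Derivation.map_one_eq_zero _
    rw [h0, sub_zero] at this
    linear_combination this
  rw [Cq]
  linear_combination ((Eq1 - 1) + PowerSeries.X*Eq1) * h1 - (PowerSeries.X*(Eq1-1)) * h3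

lemma coeff_Cq (n : ℕ) : PowerSeries.coeff n Cq = (1 - (n:ℚ)) * bernoulli n / n.factorial := by
  rw [Cq, map_sub]
  have hB : ∀ m, PowerSeries.coeff m Bq = bernoulli m / m.factorial := by
    intro m; rw [Bq, bernoulliPowerSeries, PowerSeries.coeff_mk]; simp
  cases n with
  | zero => rw [PowerSeries.coeff_zero_X_mul, hB]; simp
  | succ m =>
    rw [PowerSeries.coeff_succ_X_mul, PowerSeries.coeff_derivative, hB, Nat.factorial_succ]
    have h1 : ((m:ℚ)+1) ≠ 0 := by positivity
    have h2 : ((m.factorial :ℚ)) ≠ 0 := by positivity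
    push_cast
    field_simp

lemma coeff_X2E (n : ℕ) : PowerSeries.coeff n (PowerSeries.X^2 * Eq1)
    = if n < 2 then 0 else (1:ℚ)/((n-2).factorial : ℚ) := by
  rcases lt_or_ge n 2 with h | h
  · rw [if_pos h, PowerSeries.coeff_X_pow_mul' ]
    rw [if_neg (by omega)]
  · rw [if_neg (by omega)]
    obtain ⟨m, rfl⟩ : ∃ m, n = m + 2 := ⟨n - 2, by omega⟩
    rw [show m + 2 = 2 + m by ring] at *
    rw [PowerSeries.coeff_X_pow_mul' ]
    rw [if_pos (by omega), Eq1, PowerSeries.coeff_exp]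
    simp only [Algebra.algebraMap_self, RingHom.id_apply]



noncomputable def cc (F : PowerSeries ℚ) (n : ℕ) : ℂ := ((PowerSeries.coeff n F : ℚ) : ℂ)

lemma norm_cc (F : PowerSeries ℚ) (n : ℕ) :
    ‖cc F n‖ = ((|PowerSeries.coeff n F| : ℚ) : ℝ) := by
  rw [cc]
  rw [show (((PowerSeries.coeff n F : ℚ)) : ℂ) = (((PowerSeries.coeff n F : ℚ) : ℝ) : ℂ) by push_cast; ring]
  rw [Complex.norm_real, Real.norm_eq_abs, Rat.cast_abs]

lemma coeff_E1 (n : ℕ) : PowerSeries.coeff n (Eq1 - 1)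
    = if n = 0 then 0 else (1:ℚ)/(n.factorial : ℚ) := by
  rw [map_sub, Eq1, PowerSeries.coeff_exp, PowerSeries.coeff_one]
  rcases eq_or_ne n 0 with rfl | h
  · simp
  · rw [if_neg h, if_neg h]; simp

lemma hasSum_exp_c (w : ℂ) : HasSum (fun n => w^n / (n.factorial : ℂ)) (Complex.exp w) := by
  have := NormedSpace.expSeries_div_hasSum_exp w
  rwa [← Complex.exp_eq_exp_ℂ] at this

lemma hE (w : ℂ) : HasSum (fun n => cc (Eq1 - 1) n * w^n) (Complex.exp w - 1) := by
  have h := (hasSum_exp_c w).update 0 0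
  have h0 : w^0 / ((0:ℕ).factorial : ℂ) = 1 := by simp
  rw [h0] at h
  have : (Function.update (fun n => w^n / (n.factorial : ℂ)) 0 0)
      = fun n => cc (Eq1 - 1) n * w^n := by
    funext n
    rcases eq_or_ne n 0 with rfl | hn
    · rw [Function.update_self, cc, coeff_E1]; simp
    · rw [Function.update_of_ne hn, cc, coeff_E1, if_neg hn]
      push_cast
      field_simp
  rw [this] at h
  rw [show Complex.exp w - 1 = 0 - 1 + Complex.exp w by ring]
  exact h

lemma hE_norm (w : ℂ) : Summable fun n => ‖cc (Eq1 - 1) n * w^n‖ := by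
  apply Summable.of_nonneg_of_le (fun n => norm_nonneg _) (fun n => ?_)
    (Real.summable_pow_div_factorial ‖w‖)
  rw [norm_mul, norm_cc, coeff_E1, norm_pow]
  rcases eq_or_ne n 0 with rfl | hn
  · simp
  · rw [if_neg hn, abs_of_nonneg (by positivity)]
    push_cast
    rw [div_mul_eq_mul_div, one_mul]

lemma abs_coeff_Cq (n : ℕ) : |PowerSeries.coeff n Cq| ≤ (n:ℚ) + 1 := by
  rw [coeff_Cq, abs_div, abs_mul]
  have h1 : |1 - (n:ℚ)| ≤ (n:ℚ) + 1 := by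
    rw [abs_sub_comm]
    refine (abs_sub _ _).trans ?_
    simp [abs_of_nonneg (Nat.cast_nonneg (α := ℚ) n)]
  have h2 : |bernoulli n| ≤ (n.factorial : ℚ) := bern_abs_le n
  have h3 : |(n.factorial : ℚ)| = (n.factorial : ℚ) := abs_of_nonneg (by positivity)
  rw [h3]
  rw [div_le_iff₀ (by positivity)]
  calc |1 - (n:ℚ)| * |bernoulli n| ≤ ((n:ℚ)+1) * (n.factorial : ℚ) := by
        apply mul_le_mul h1 h2 (abs_nonneg _) (by positivity)
    _ = _ := by ring

lemma summable_poly_geom (k : ℕ) : Summable (fun n : ℕ => ((n:ℝ)+1)^k * (1/2)^n) := by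
  have h := summable_pow_mul_geometric_of_norm_lt_one (R := ℝ) (r := 1/2) k (by
    rw [Real.norm_eq_abs]; rw [abs_of_nonneg (by norm_num)]; norm_num)
  have h2 := (summable_pow_mul_geometric_of_norm_lt_one (R := ℝ) (r := 1/2) k (by
    rw [Real.norm_eq_abs]; rw [abs_of_nonneg (by norm_num)]; norm_num)).mul_left (2^k)
  have hg : Summable (fun n : ℕ => 2^k * ((n:ℝ)^k * (1/2)^n) + (1/2)^n) :=
    h2.add (summable_geometric_of_lt_one (r := (1/2:ℝ)) (by norm_num) (by norm_num))
  have hle : ∀ n : ℕ, ((n:ℝ)+1)^k * (1/2)^n ≤ 2^k * ((n:ℝ)^k * (1/2)^n) + (1/2)^n := by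
    intro n
    have hb : ((n:ℝ)+1)^k ≤ 2^k * (n:ℝ)^k + 1 := by
      rcases Nat.eq_zero_or_pos n with rfl | hn
      · simp
      · have h1 : ((n:ℝ)+1) ≤ 2*(n:ℝ) := by
          have : (1:ℝ) ≤ (n:ℝ) := by exact_mod_cast hn
          linarith
        have := pow_le_pow_left₀ (by positivity) h1 k
        rw [mul_pow] at this
        nlinarith [pow_nonneg (by positivity : (0:ℝ) ≤ 2*(n:ℝ)) k]
    calc ((n:ℝ)+1)^k * (1/2)^n ≤ (2^k * (n:ℝ)^k + 1) * (1/2)^n := by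
          apply mul_le_mul_of_nonneg_right hb (by positivity)
      _ = 2^k * ((n:ℝ)^k * (1/2)^n) + (1/2)^n := by ring
  exact Summable.of_nonneg_of_le (fun n => by positivity) hle hg

lemma hC_norm (w : ℂ) (hw : ‖w‖ ≤ 1/2) : Summable fun n => ‖cc Cq n * w^n‖ := by
  have hle : ∀ n : ℕ, ‖cc Cq n * w^n‖ ≤ ((n:ℝ)+1)^1 * (1/2)^n := by
    intro n
    rw [norm_mul, norm_cc, norm_pow, pow_one]
    have h1 : ((|PowerSeries.coeff n Cq| : ℚ) : ℝ) ≤ (n:ℝ)+1 := by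
      have := abs_coeff_Cq n
      have := (Rat.cast_le (K := ℝ)).mpr this
      push_cast at this ⊢
      linarith
    have h2 : ‖w‖^n ≤ (1/2)^n := pow_le_pow_left₀ (norm_nonneg _) hw n
    have h3 : (0:ℝ) ≤ ((|PowerSeries.coeff n Cq| : ℚ) : ℝ) := by positivity
    exact mul_le_mul h1 h2 (by positivity) (by positivity)
  exact Summable.of_nonneg_of_le (fun n => norm_nonneg _) hle (summable_poly_geom 1)

lemma cauchy (F G : PowerSeries ℚ) (w : ℂ)
    (hF : Summable fun n => ‖cc F n * w^n‖) (hG : Summable fun n => ‖cc G n * w^n‖) :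
    (∑' n, cc F n * w^n) * (∑' n, cc G n * w^n) = ∑' n, cc (F*G) n * w^n := by
  rw [tsum_mul_tsum_eq_tsum_sum_antidiagonal_of_summable_norm hF hG]
  congr 1; funext n
  rw [cc, PowerSeries.coeff_mul]
  push_cast
  rw [Finset.sum_mul]
  apply Finset.sum_congr rfl
  intro p hp
  have hpn := Finset.HasAntidiagonal.mem_antidiagonal.mp hp
  simp only [cc]
  rw [← hpn, pow_add]; ring

lemma abs_coeff_E1 (n : ℕ) : |PowerSeries.coeff n (Eq1 - 1)| ≤ 1 := by
  rw [coeff_E1]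
  rcases eq_or_ne n 0 with rfl | hn
  · simp
  · rw [if_neg hn, abs_of_nonneg (by positivity)]
    rw [div_le_one (by positivity)]
    exact_mod_cast Nat.one_le_iff_ne_zero.mpr (Nat.factorial_ne_zero n)

lemma hEC_norm (w : ℂ) (hw : ‖w‖ ≤ 1/2) :
    Summable fun n => ‖cc ((Eq1 - 1) * Cq) n * w^n‖ := by
  have hle : ∀ n : ℕ, ‖cc ((Eq1 - 1) * Cq) n * w^n‖ ≤ ((n:ℝ)+1)^2 * (1/2)^n := by
    intro n
    rw [norm_mul, norm_cc, norm_pow]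
    have hcoeff : |PowerSeries.coeff n ((Eq1 - 1) * Cq)| ≤ ((n:ℚ)+1)^2 := by
      rw [PowerSeries.coeff_mul]
      refine (Finset.abs_sum_le_sum_abs _ _).trans ?_
      have hbound : ∀ p ∈ Finset.HasAntidiagonal.antidiagonal n,
          |PowerSeries.coeff p.1 (Eq1 - 1) * PowerSeries.coeff p.2 Cq| ≤ (n:ℚ)+1 := by
        intro p hp
        have hpn := Finset.HasAntidiagonal.mem_antidiagonal.mp hp
        rw [abs_mul]
        have h1 := abs_coeff_E1 p.1
        have h2 := abs_coeff_Cq p.2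
        have h3 : ((p.2:ℚ))+1 ≤ (n:ℚ)+1 := by
          have : p.2 ≤ n := by omega
          have := (Nat.cast_le (α := ℚ)).mpr this
          linarith
        calc |PowerSeries.coeff p.1 (Eq1 - 1)| * |PowerSeries.coeff p.2 Cq|
            ≤ 1 * ((n:ℚ)+1) := mul_le_mul h1 (h2.trans h3) (abs_nonneg _) zero_le_one
          _ = (n:ℚ)+1 := one_mul _
      refine (Finset.sum_le_sum hbound).trans ?_
      rw [Finset.sum_const, Finset.Nat.card_antidiagonal, nsmul_eq_mul]
      have : (0:ℚ) ≤ (n:ℚ)+1 := by positivity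
      push_cast
      nlinarith
    have h1 : ((|PowerSeries.coeff n ((Eq1 - 1) * Cq)| : ℚ) : ℝ) ≤ ((n:ℝ)+1)^2 := by
      have := (Rat.cast_le (K := ℝ)).mpr hcoeff
      push_cast at this ⊢
      linarith
    have h2 : ‖w‖^n ≤ (1/2)^n := pow_le_pow_left₀ (norm_nonneg _) hw n
    exact mul_le_mul h1 h2 (by positivity) (by positivity)
  exact Summable.of_nonneg_of_le (fun n => norm_nonneg _) hle (summable_poly_geom 2)

noncomputable def tC (w : ℂ) : ℂ := ∑' n, cc Cq n * w^n

lemma hX2E (w : ℂ) : HasSum (fun n => cc (PowerSeries.X^2 * Eq1) n * w^n)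
    (w^2 * Complex.exp w) := by
  have H : HasSum (fun n : ℕ => cc (PowerSeries.X^2 * Eq1) (n+2) * w^(n+2))
      (w^2 * Complex.exp w) := by
    have h := (hasSum_exp_c w).mul_left (w^2)
    have he : (fun n : ℕ => cc (PowerSeries.X^2 * Eq1) (n+2) * w^(n+2))
        = fun n : ℕ => w^2 * (w^n / (n.factorial : ℂ)) := by
      funext n
      rw [cc, coeff_X2E, if_neg (by omega)]
      rw [show n + 2 - 2 = n from by omega]
      push_cast
      field_simp
      ring
    rw [he]
    exact h
  have hiff := (hasSum_nat_add_iff (f := fun n => cc (PowerSeries.X^2 * Eq1) n * w^n) 2).mp H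
  have hz : ∑ i ∈ Finset.range 2, cc (PowerSeries.X^2 * Eq1) i * w^i = 0 := by
    rw [Finset.sum_range_succ, Finset.sum_range_one]
    simp only [cc]
    rw [coeff_X2E, coeff_X2E]
    norm_num
  rw [hz, add_zero] at hiff
  exact hiff

lemma analytic_key (w : ℂ) (hw : ‖w‖ ≤ 1/2) :
    (Complex.exp w - 1)^2 * tC w = w^2 * Complex.exp w := by
  have h1 : (Complex.exp w - 1) * tC w = ∑' n, cc ((Eq1 - 1) * Cq) n * w^n := by
    have h := cauchy (Eq1 - 1) Cq w (hE_norm w) (hC_norm w hw)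
    rw [(hE w).tsum_eq] at h
    rw [tC]; exact h
  have h2 : (Complex.exp w - 1) * ((Complex.exp w - 1) * tC w)
      = ∑' n, cc ((Eq1 - 1) * ((Eq1 - 1) * Cq)) n * w^n := by
    have h := cauchy (Eq1 - 1) ((Eq1 - 1) * Cq) w (hE_norm w) (hEC_norm w hw)
    rw [(hE w).tsum_eq] at h
    rw [h1]; exact h
  have h3 : (Eq1 - 1) * ((Eq1 - 1) * Cq) = PowerSeries.X^2 * Eq1 := by
    rw [← formal_main]; ring
  rw [sq, mul_assoc, h2, h3, (hX2E w).tsum_eq]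

open Real Complex

theorem taylor_expansion_near_zero :
    ∃ r > 0, ∀ z : ℂ, ‖z‖ < r →
      (if z = 0 then (-1 / 12 : ℂ)
        else Complex.exp (2 * (π : ℂ) * z) / (Complex.exp (2 * (π : ℂ) * z) - 1) ^ 2
          - 1 / (2 * (π : ℂ) * z) ^ 2) =
      -∑' k : ℕ, ((bernoulli (k + 2) : ℚ) : ℂ) * (2 * (π : ℂ)) ^ k * z ^ k /
        ((k.factorial : ℂ) * ((k : ℂ) + 2)) := by
  have hpi : (0:ℝ) < Real.pi := Real.pi_pos
  refine ⟨1/(8*Real.pi), by positivity, fun z hz => ?_⟩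
  rcases eq_or_ne z 0 with rfl | hz0
  · rw [if_pos rfl]
    have htsum : ∑' k : ℕ, ((bernoulli (k + 2) : ℚ) : ℂ) * (2 * (π : ℂ)) ^ k * (0:ℂ) ^ k /
        ((k.factorial : ℂ) * ((k : ℂ) + 2)) = 1/12 := by
      rw [tsum_eq_single 0 (fun b hb => by rw [zero_pow hb]; ring)]
      have hb2 : bernoulli 2 = 1/6 := by
        rw [bernoulli_eq_bernoulli'_of_ne_one (by norm_num), bernoulli'_two]
      norm_num [hb2]
    rw [htsum]
    norm_num
  · rw [if_neg hz0]
    set w : ℂ := 2 * (π : ℂ) * z with hwdef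
    have hwnorm : ‖w‖ ≤ 1/2 := by
      have h1 : ‖w‖ = 2 * Real.pi * ‖z‖ := by
        rw [hwdef, norm_mul, norm_mul]
        simp [Complex.norm_real, Real.norm_eq_abs, abs_of_pos hpi]
      rw [h1]
      have h2 : ‖z‖ < 1/(8*Real.pi) := hz
      have h3 : 2 * Real.pi * ‖z‖ ≤ 2 * Real.pi * (1/(8*Real.pi)) := by
        apply mul_le_mul_of_nonneg_left h2.le (by positivity)
      have h4 : 2 * Real.pi * (1/(8*Real.pi)) = 1/4 := by field_simp; ring
      linarith
    have hw0 : w ≠ 0 := by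
      rw [hwdef]
      apply mul_ne_zero (mul_ne_zero two_ne_zero ?_) hz0
      exact_mod_cast Complex.ofReal_ne_zero.mpr hpi.ne'
    have hexp : Complex.exp w ≠ 1 := by
      intro h
      obtain ⟨n, hn⟩ := Complex.exp_eq_one_iff.mp h
      rcases eq_or_ne n 0 with rfl | hn0
      · rw [Int.cast_zero, zero_mul] at hn; exact hw0 hn
      · have : ‖w‖ = |(n:ℝ)| * (2 * Real.pi) := by
          rw [hn]
          rw [norm_mul, norm_mul, norm_mul]
          simp [Complex.norm_real, Real.norm_eq_abs, abs_of_pos hpi, Complex.norm_intCast]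
          try ring
        have h1 : (1:ℝ) ≤ |(n:ℝ)| := by
          rw [← Int.cast_abs]
          exact_mod_cast Int.one_le_abs (by exact_mod_cast hn0)
        have h2 : 2 * Real.pi ≤ ‖w‖ := by
          rw [this]
          nlinarith
        nlinarith [Real.pi_gt_three]
    have hden : Complex.exp w - 1 ≠ 0 := sub_ne_zero.mpr hexp
    have key := analytic_key w hwnorm
    -- HasSum for tC
    have hCv : HasSum (fun n => cc Cq n * w^n) (tC w) :=
      ((hC_norm w hwnorm).of_norm).hasSum
    -- tail sum
    have hf0 : cc Cq 0 * w^0 = 1 := by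
      simp only [cc]
      rw [coeff_Cq]
      norm_num
    have hf1 : cc Cq 1 * w^1 = 0 := by
      simp only [cc]
      rw [coeff_Cq]
      norm_num
    have htail : HasSum (fun k => cc Cq (k+2) * w^(k+2)) (tC w - 1) := by
      apply (hasSum_nat_add_iff (f := fun n => cc Cq n * w^n) 2).mpr
      · have hsum2 : ∑ i ∈ Finset.range 2, cc Cq i * w^i = 1 := by
          rw [Finset.sum_range_succ, Finset.sum_range_one, hf0, hf1]; ring
        rw [hsum2, sub_add_cancel]
        exact hCv
    -- term identification
    have hGk : ∀ k : ℕ, ((bernoulli (k + 2) : ℚ) : ℂ) * (2 * (π : ℂ)) ^ k * z ^ k /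
        ((k.factorial : ℂ) * ((k : ℂ) + 2)) = -(cc Cq (k+2) * w^(k+2)) / w^2 := by
      intro k
      simp only [cc]
      rw [coeff_Cq]
      have hw2 : w^(k+2) = (2 * (π : ℂ))^k * z^k * w^2 := by
        rw [hwdef, mul_pow, pow_add]
        ring
      rw [hw2]
      have hfac : (((k+2).factorial : ℚ) : ℂ) = ((k:ℂ)+2) * ((k:ℂ)+1) * (k.factorial : ℂ) := by
        rw [Nat.factorial_succ, Nat.factorial_succ]
        push_cast
        ring
      have hfk : ((k.factorial : ℚ) : ℂ) ≠ 0 := by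
        exact_mod_cast Nat.cast_ne_zero.mpr (Nat.factorial_ne_zero k)
      have hk2 : ((k:ℂ)+2) ≠ 0 := by
        have h : ((k:ℂ)+2) = ((k+2:ℕ):ℂ) := by push_cast; ring
        rw [h]
        exact_mod_cast Nat.succ_ne_zero (k+1)
      have hw2ne : w^2 ≠ 0 := pow_ne_zero 2 hw0
      push_cast
      rw [show ((k+2).factorial : ℂ) = ((k:ℂ)+2) * ((k:ℂ)+1) * (k.factorial : ℂ) by
        rw [Nat.factorial_succ, Nat.factorial_succ]; push_cast; ring]
      have hk1 : ((k:ℂ)+1) ≠ 0 := by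
        have h : ((k:ℂ)+1) = ((k+1:ℕ):ℂ) := by push_cast; ring
        rw [h]
        exact_mod_cast Nat.succ_ne_zero k
      have hfk' : ((k.factorial : ℕ) : ℂ) ≠ 0 :=
        Nat.cast_ne_zero.mpr (Nat.factorial_ne_zero k)
      field_simp
      ring
    have hsumG : (∑' k : ℕ, ((bernoulli (k + 2) : ℚ) : ℂ) * (2 * (π : ℂ)) ^ k * z ^ k /
        ((k.factorial : ℂ) * ((k : ℂ) + 2))) = -(tC w - 1) / w^2 := by
      rw [tsum_congr hGk]
      exact (htail.neg.div_const (w^2)).tsum_eq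
    rw [hsumG]
    have hE2 : (Complex.exp w - 1)^2 ≠ 0 := pow_ne_zero 2 hden
    have hw2ne : w^2 ≠ 0 := pow_ne_zero 2 hw0
    have htc : tC w = w^2 * Complex.exp w / (Complex.exp w - 1)^2 := by
      rw [eq_div_iff hE2]
      linear_combination key
    rw [htc]
    field_simp
end

section
/- For every natural number m ≥ 1, the 2m-th derivative at x = 0 of the function f(x) = (1/(2π²)) ∑_{n=1}^∞ (x² - n²)/(x² + n²)² equals ((-1)^{m+1} (2m+1)! / (2π²)) · ζ(2m+2). -/
open Real

private noncomputable def zS (p : ℕ) : ℝ := ∑' n : ℕ, 1 / ((n : ℝ) + 1) ^ p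

private lemma summable_zS {p : ℕ} (hp : 2 ≤ p) :
    Summable (fun n : ℕ => 1 / ((n : ℝ) + 1) ^ p) := by
  have := (Real.summable_one_div_nat_pow (p := p)).2 (by omega)
  have h2 := (summable_nat_add_iff (f := fun n : ℕ => 1 / (n : ℝ) ^ p) 1).2 this
  simpa [Nat.cast_add] using h2

private lemma hasSum_term (n : ℕ) {x : ℝ} (hx : |x| < 1) :
    HasSum (fun k : ℕ =>
      (-1) ^ (k + 1) * (2 * (k : ℝ) + 1) / ((n : ℝ) + 1) ^ (2 * k + 2) * x ^ (2 * k))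
      ((x ^ 2 - ((n : ℝ) + 1) ^ 2) / (x ^ 2 + ((n : ℝ) + 1) ^ 2) ^ 2) := by
  have hN1 : (1 : ℝ) ≤ ((n : ℝ) + 1) ^ 2 := by
    nlinarith [Nat.cast_nonneg (α := ℝ) n]
  have hNpos : (0 : ℝ) < ((n : ℝ) + 1) ^ 2 := by positivity
  set N : ℝ := ((n : ℝ) + 1) ^ 2 with hN
  set z : ℝ := -(x ^ 2) / N with hzdef
  have hx2 : x ^ 2 < 1 := by
    have := sq_abs x
    nlinarith [abs_nonneg x]
  have hz : ‖z‖ < 1 := by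
    rw [Real.norm_eq_abs, hzdef, abs_div, abs_neg, abs_of_nonneg (sq_nonneg x),
      abs_of_pos hNpos]
    rw [div_lt_one hNpos]
    linarith
  have h1 := hasSum_coe_mul_geometric_of_norm_lt_one hz
  have h2 := hasSum_geometric_of_norm_lt_one hz
  have h3 := ((h1.mul_left 2).add h2).mul_left (-(1 / N))
  have h1z : (1 : ℝ) - z ≠ 0 := by
    have : ‖z‖ < 1 := hz
    rw [Real.norm_eq_abs] at this
    intro h
    have : z = 1 := by linarith [abs_lt.1 this]
    simp [this] at hz
  convert h3 using 1
  · rfl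
  · funext k
    have hzk : z ^ k = (-1) ^ k * (x ^ 2) ^ k / N ^ k := by
      rw [hzdef, div_pow, neg_pow, mul_comm ((-1:ℝ)^k)]
    have hNk : ((n : ℝ) + 1) ^ (2 * k + 2) = N ^ k * N := by
      rw [hN, ← pow_mul, ← pow_add]
    have hxk : x ^ (2 * k) = (x ^ 2) ^ k := by rw [← pow_mul]
    rw [hNk, hxk, hzk]
    have hNk0 : N ^ k ≠ 0 := by positivity
    field_simp
    ring
  · have hden : x ^ 2 + N ≠ 0 := by positivity
    have h1zval : (1 : ℝ) - z = (N + x ^ 2) / N := by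
      rw [hzdef]; field_simp; ring
    rw [h1zval, hzdef]
    field_simp
    ring

private lemma summable_aux {y : ℝ} (hy : |y| < 1) :
    Summable (fun k : ℕ => (2 * (k : ℝ) + 1) * |y| ^ (2 * k)) := by
  have hy2 : ‖y ^ 2‖ < 1 := by
    rw [Real.norm_eq_abs, abs_pow, sq_abs]
    nlinarith [abs_nonneg y, sq_abs y]
  have h1 : Summable (fun k : ℕ => (k : ℝ) ^ 1 * (y ^ 2) ^ k) :=
    summable_pow_mul_geometric_of_norm_lt_one 1 hy2
  have h2 : Summable (fun k : ℕ => (y ^ 2) ^ k) := summable_geometric_of_norm_lt_one hy2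
  have h3 := (h1.mul_left 2).add h2
  apply h3.congr
  intro k
  have h4 : |y| ^ (2 * k) = (y ^ 2) ^ k := by
    rw [← abs_pow, pow_mul, abs_of_nonneg (by positivity : (0:ℝ) ≤ ((y^2)^k))]
  rw [h4]
  ring

private lemma summable_F {y : ℝ} (hy : |y| < 1) :
    Summable (fun p : ℕ × ℕ =>
      (-1) ^ (p.2 + 1) * (2 * (p.2 : ℝ) + 1) / ((p.1 : ℝ) + 1) ^ (2 * p.2 + 2)
        * y ^ (2 * p.2)) := by
  apply Summable.of_norm_bounded (g := fun p : ℕ × ℕ =>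
    (1 / ((p.1 : ℝ) + 1) ^ 2) * ((2 * (p.2 : ℝ) + 1) * |y| ^ (2 * p.2)))
  · exact (summable_zS le_rfl).mul_of_nonneg (summable_aux hy)
      (fun n => by positivity) (fun k => by positivity)
  · rintro ⟨n, k⟩
    have hb : (1 : ℝ) ≤ (n : ℝ) + 1 := by
      have := Nat.cast_nonneg (α := ℝ) n; linarith
    have h1 : ((n : ℝ) + 1) ^ 2 ≤ ((n : ℝ) + 1) ^ (2 * k + 2) :=
      pow_le_pow_right₀ hb (by omega)
    have h2 : (0 : ℝ) < ((n : ℝ) + 1) ^ 2 := by positivity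
    simp only [Real.norm_eq_abs, abs_mul, abs_div, abs_pow, abs_neg, abs_one, one_pow,
      one_mul]
    rw [abs_of_nonneg (by positivity : (0:ℝ) ≤ 2 * (k : ℝ) + 1),
      abs_of_nonneg (by linarith : (0:ℝ) ≤ (n : ℝ) + 1)]
    rw [div_mul_eq_mul_div, one_div, inv_mul_eq_div, div_le_div_iff₀ (by positivity) h2]
    calc (2 * (k : ℝ) + 1) * |y| ^ (2 * k) * ((n : ℝ) + 1) ^ 2
        ≤ (2 * (k : ℝ) + 1) * |y| ^ (2 * k) * ((n : ℝ) + 1) ^ (2 * k + 2) := by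
          apply mul_le_mul_of_nonneg_left h1 (by positivity)
      _ = (2 * (k : ℝ) + 1) * |y| ^ (2 * k) * ((n : ℝ) + 1) ^ (2 * k + 2) := rfl

private lemma hasSum_even {y : ℝ} (hy : |y| < 1) :
    HasSum (fun k : ℕ => (-1) ^ (k + 1) * (2 * (k : ℝ) + 1) * zS (2 * k + 2) * y ^ (2 * k))
      (∑' n : ℕ, (y ^ 2 - ((n : ℝ) + 1) ^ 2) / (y ^ 2 + ((n : ℝ) + 1) ^ 2) ^ 2) := by
  set F : ℕ × ℕ → ℝ := fun p =>
    (-1) ^ (p.2 + 1) * (2 * (p.2 : ℝ) + 1) / ((p.1 : ℝ) + 1) ^ (2 * p.2 + 2) * y ^ (2 * p.2)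
    with hFdef
  have hFs : Summable F := summable_F hy
  have hinner : ∀ k : ℕ, HasSum (fun n : ℕ => F (n, k))
      ((-1) ^ (k + 1) * (2 * (k : ℝ) + 1) * zS (2 * k + 2) * y ^ (2 * k)) := by
    intro k
    have hs := summable_zS (p := 2 * k + 2) (by omega)
    have h := (hs.hasSum.mul_left ((-1 : ℝ) ^ (k + 1) * (2 * (k : ℝ) + 1))).mul_right
      (y ^ (2 * k))
    have hzS : (∑' n : ℕ, 1 / ((n : ℝ) + 1) ^ (2 * k + 2)) = zS (2 * k + 2) := rfl
    rw [hzS] at h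
    apply h.congr_fun
    intro n
    simp only [hFdef]
    ring
  have hswap : Summable (fun q : ℕ × ℕ => F (q.2, q.1)) := by
    have := (Equiv.prodComm ℕ ℕ).summable_iff.2 hFs
    exact this
  have houter : Summable fun k : ℕ => ∑' n : ℕ, F (n, k) := hswap.prod
  have hvalue : (∑' k : ℕ, ∑' n : ℕ, F (n, k))
      = ∑' n : ℕ, (y ^ 2 - ((n : ℝ) + 1) ^ 2) / (y ^ 2 + ((n : ℝ) + 1) ^ 2) ^ 2 := by
    rw [Summable.tsum_comm (f := fun n k => F (n, k)) hFs]
    exact tsum_congr fun n => (hasSum_term n hy).tsum_eq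
  have h := houter.hasSum
  rw [hvalue] at h
  exact h.congr_fun fun k => ((hinner k).tsum_eq).symm

private noncomputable def zc : ℕ → ℝ := fun j =>
  if 2 ∣ j then (1 / (2 * π ^ 2)) * ((-1) ^ (j / 2 + 1) * ((j : ℝ) + 1) * zS (j + 2)) else 0

private lemma zS_nonneg (p : ℕ) : 0 ≤ zS p :=
  tsum_nonneg fun n => by positivity

private lemma zS_le {p : ℕ} (hp : 2 ≤ p) : zS p ≤ zS 2 := by
  apply Summable.tsum_le_tsum _ (summable_zS hp) (summable_zS le_rfl)
  intro n
  have hb : (1 : ℝ) ≤ (n : ℝ) + 1 := by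
    have := Nat.cast_nonneg (α := ℝ) n; linarith
  apply one_div_le_one_div_of_le (by positivity)
  exact pow_le_pow_right₀ hb hp

private lemma zc_even (k : ℕ) : zc (2 * k)
    = (1 / (2 * π ^ 2)) * ((-1) ^ (k + 1) * (2 * (k : ℝ) + 1) * zS (2 * k + 2)) := by
  have hdvd : 2 ∣ 2 * k := ⟨k, rfl⟩
  simp only [zc]
  rw [if_pos hdvd]
  have h2 : 2 * k / 2 = k := by omega
  rw [h2]
  push_cast
  ring

private lemma hasSum_zc {y : ℝ} (hy : |y| < 1) :
    HasSum (fun j : ℕ => zc j * y ^ j)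
      ((1 / (2 * π ^ 2)) * ∑' n : ℕ,
        (y ^ 2 - ((n : ℝ) + 1) ^ 2) / (y ^ 2 + ((n : ℝ) + 1) ^ 2) ^ 2) := by
  have h := (hasSum_even hy).mul_left (1 / (2 * π ^ 2))
  refine (Function.Injective.hasSum_iff (f := fun j => zc j * y ^ j)
    (g := fun k : ℕ => 2 * k) (fun a b hab => Nat.eq_of_mul_eq_mul_left two_pos hab) ?_).1 ?_
  · intro j hj
    have h2 : ¬ (2 ∣ j) := by
      intro ⟨c, hc⟩
      exact hj ⟨c, hc.symm⟩
    simp [zc, h2]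
  · apply h.congr_fun
    intro k
    show zc (2 * k) * y ^ (2 * k) = _
    rw [zc_even]
    ring

private lemma zc_abs_le (j : ℕ) : |zc j| ≤ (1 / (2 * π ^ 2) * zS 2) * ((j : ℝ) + 1) := by
  have hπ : (0 : ℝ) < 1 / (2 * π ^ 2) := by positivity
  have hj : (0 : ℝ) ≤ (j : ℝ) + 1 := by positivity
  unfold zc
  split_ifs with h
  · rw [abs_mul, abs_of_pos hπ]
    have habs : |(-1 : ℝ) ^ (j / 2 + 1) * ((j : ℝ) + 1) * zS (j + 2)|
        = ((j : ℝ) + 1) * zS (j + 2) := by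
      rw [abs_mul, abs_mul, abs_pow, abs_neg, abs_one, one_pow, one_mul,
        abs_of_nonneg hj, abs_of_nonneg (zS_nonneg _)]
    rw [habs]
    have hle : zS (j + 2) ≤ zS 2 := zS_le (by omega)
    calc (1 / (2 * π ^ 2)) * (((j : ℝ) + 1) * zS (j + 2))
        ≤ (1 / (2 * π ^ 2)) * (((j : ℝ) + 1) * zS 2) :=
          mul_le_mul_of_nonneg_left (mul_le_mul_of_nonneg_left hle hj) hπ.le
      _ = (1 / (2 * π ^ 2) * zS 2) * ((j : ℝ) + 1) := by ring
  · rw [abs_zero]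
    have := zS_nonneg 2
    positivity

private lemma summable_norm_zc :
    Summable (fun j : ℕ => ‖FormalMultilinearSeries.ofScalars ℝ zc j‖ * ((1/2 : ℝ)) ^ j) := by
  have h1 : Summable (fun j : ℕ => (j : ℝ) ^ 1 * (1/2 : ℝ) ^ j) :=
    summable_pow_mul_geometric_of_norm_lt_one 1 (by rw [Real.norm_eq_abs, abs_of_pos] <;> norm_num)
  have h2 : Summable (fun j : ℕ => (1/2 : ℝ) ^ j) :=
    summable_geometric_of_norm_lt_one (by rw [Real.norm_eq_abs, abs_of_pos] <;> norm_num)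
  have hplus : Summable (fun j : ℕ => ((j : ℝ) + 1) * (1/2 : ℝ) ^ j) :=
    (h1.add h2).congr (fun j => by ring)
  have hK : Summable (fun j : ℕ =>
      (1 / (2 * π ^ 2) * zS 2) * (((j : ℝ) + 1) * (1/2 : ℝ) ^ j)) :=
    hplus.mul_left _
  apply Summable.of_nonneg_of_le (fun j => by positivity) _ hK
  intro j
  rw [FormalMultilinearSeries.ofScalars_norm, Real.norm_eq_abs]
  have hz2 := zS_nonneg 2
  calc |zc j| * (1/2 : ℝ) ^ j
      ≤ ((1 / (2 * π ^ 2) * zS 2) * ((j : ℝ) + 1)) * (1/2 : ℝ) ^ j :=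
        mul_le_mul_of_nonneg_right (zc_abs_le j) (by positivity)
    _ = _ := by ring

private lemma hasFPS :
    HasFPowerSeriesOnBall (fun x : ℝ => (1 / (2 * π ^ 2)) * ∑' n : ℕ,
        (x ^ 2 - ((n : ℝ) + 1) ^ 2) / (x ^ 2 + ((n : ℝ) + 1) ^ 2) ^ 2)
      (FormalMultilinearSeries.ofScalars ℝ zc) 0 ((1/2 : NNReal) : ENNReal) := by
  refine ⟨?_, by norm_num, ?_⟩
  · apply FormalMultilinearSeries.le_radius_of_summable_norm
    apply summable_norm_zc.congr
    intro j
    rw [show ((1/2 : NNReal) : ℝ) = (1/2 : ℝ) by norm_num]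
  · intro y hy
    have hy' : ‖y‖ < 1/2 := by
      have h0 := mem_emetric_ball_zero_iff.mp hy
      have h1 : ‖y‖₊ < (1/2 : NNReal) := by exact_mod_cast h0
      have := (NNReal.coe_lt_coe).2 h1
      simpa using this
    have hy1 : |y| < 1 := by
      rw [← Real.norm_eq_abs]; linarith
    have h := hasSum_zc hy1
    rw [zero_add]
    apply h.congr_fun
    intro j
    rw [FormalMultilinearSeries.ofScalars_apply_eq, smul_eq_mul]

theorem iteratedDeriv_series_function (m : ℕ) (hm : 1 ≤ m) :
    ((iteratedDeriv (2 * m)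
      (fun x : ℝ => (1 / (2 * π ^ 2)) * ∑' n : ℕ,
        (x ^ 2 - ((n : ℝ) + 1) ^ 2) / (x ^ 2 + ((n : ℝ) + 1) ^ 2) ^ 2) 0 : ℝ) : ℂ) =
      ((-1) ^ (m + 1) * ((2 * m + 1).factorial : ℂ) / (2 * (π : ℂ) ^ 2)) *
        riemannZeta (2 * m + 2) := by
  have hps := hasFPS
  have h := hps.factorial_smul (1 : ℝ) (2 * m)
  have hder : iteratedDeriv (2 * m)
      (fun x : ℝ => (1 / (2 * π ^ 2)) * ∑' n : ℕ,
        (x ^ 2 - ((n : ℝ) + 1) ^ 2) / (x ^ 2 + ((n : ℝ) + 1) ^ 2) ^ 2) 0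
      = ((2 * m).factorial : ℝ) * zc (2 * m) := by
    rw [iteratedDeriv_eq_iteratedFDeriv, ← h, FormalMultilinearSeries.ofScalars_apply_eq]
    simp [smul_eq_mul]
  rw [hder, zc_even]
  have hzeta : riemannZeta (2 * (m : ℂ) + 2)
      = ∑' n : ℕ, 1 / ((n : ℂ) + 1) ^ (2 * m + 2 : ℕ) := by
    have hs : 1 < (((2 * m + 2 : ℕ) : ℂ)).re := by
      rw [Complex.natCast_re]
      exact_mod_cast by omega
    have hz := zeta_eq_tsum_one_div_nat_add_one_cpow hs
    rw [show (2 * (m : ℂ) + 2) = ((2 * m + 2 : ℕ) : ℂ) by push_cast; ring, hz]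
    refine tsum_congr fun n => ?_
    rw [Complex.cpow_natCast]
  have hcast : ((zS (2 * m + 2) : ℝ) : ℂ) = ∑' n : ℕ, 1 / ((n : ℂ) + 1) ^ (2 * m + 2 : ℕ) := by
    rw [zS, Complex.ofReal_tsum]
    refine tsum_congr fun n => ?_
    push_cast
    ring
  have hfac : ((2 * m + 1).factorial : ℂ) = (2 * (m : ℂ) + 1) * ((2 * m).factorial : ℂ) := by
    rw [Nat.factorial_succ]
    push_cast
    ring
  push_cast
  rw [hcast, hzeta, hfac]
  have hπ : (π : ℂ) ≠ 0 := Complex.ofReal_ne_zero.2 Real.pi_ne_zero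
  field_simp
end

section
/- For every real w > 0 with w ≠ 1: (∑_{n∈ℤ} 1/z_n)² - 2·∑_{n<m} 1/(z_n z_m) = ∑_{n∈ℤ} 1/z_n², where z_n = log w + 2πin, and this common value equals 1/(log w)² + 2∑_{n=1}^∞ ((log w)² - 4π²n²)/((log w)² + 4π²n²)². -/
open Real Complex Filter

lemma Icc_succ' (N : ℕ) :
    Finset.Icc (-((N:ℤ)+1)) ((N:ℤ)+1) =
      insert (-((N:ℤ)+1)) (insert ((N:ℤ)+1) (Finset.Icc (-(N:ℤ)) (N:ℤ))) := by
  ext x; simp [Finset.mem_Icc]; omega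

lemma sum_Icc_eq (F : ℤ → ℂ) (N : ℕ) :
    ∑ n ∈ Finset.Icc (-(N:ℤ)) (N:ℤ), F n
      = F 0 + ∑ k ∈ Finset.range N, (F ((k:ℤ)+1) + F (-((k:ℤ)+1))) := by
  induction N with
  | zero => simp
  | succ N ih =>
    have h1 : (((N+1:ℕ)):ℤ) = (N:ℤ)+1 := by omega
    have h2 : (-(((N+1:ℕ)):ℤ)) = -((N:ℤ)+1) := by omega
    rw [h2, h1, Icc_succ']
    rw [Finset.sum_insert (by simp only [Finset.mem_insert, Finset.mem_Icc]; omega),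
      Finset.sum_insert (by simp only [Finset.mem_insert, Finset.mem_Icc]; omega)]
    rw [ih, Finset.sum_range_succ]; ring

lemma key_mul (L a : ℝ) : ((L:ℂ)+a*Complex.I)*((L:ℂ)-a*Complex.I) = ((L^2+a^2:ℝ):ℂ) := by
  push_cast; linear_combination (-(a:ℂ)^2) * Complex.I_sq

lemma ne_zero_of_im (L a : ℝ) (ha : a ≠ 0) : (L:ℂ) + a*Complex.I ≠ 0 := by
  intro h
  have := congrArg Complex.im h
  simp at this; exact ha this

lemma ne_zero_of_im' (L a : ℝ) (ha : a ≠ 0) : (L:ℂ) - a*Complex.I ≠ 0 := by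
  have := ne_zero_of_im L (-a) (by simpa using ha)
  intro h; apply this; rw [← h]; push_cast; ring

lemma pair_sum (L a : ℝ) (ha : a ≠ 0) :
    1/((L:ℂ) + a*Complex.I) + 1/((L:ℂ) - a*Complex.I)
      = ((2*L/(L^2+a^2) : ℝ) : ℂ) := by
  have h1 := ne_zero_of_im L a ha
  have h2 := ne_zero_of_im' L a ha
  have h3 : ((L^2+a^2 : ℝ):ℂ) ≠ 0 := Complex.ofReal_ne_zero.mpr (by positivity)
  rw [div_add_div _ _ h1 h2, Complex.ofReal_div, div_eq_div_iff (by exact mul_ne_zero h1 h2) h3, key_mul]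
  push_cast; ring

lemma pair_sq_sum (L a : ℝ) (ha : a ≠ 0) :
    1/((L:ℂ) + a*Complex.I)^2 + 1/((L:ℂ) - a*Complex.I)^2
      = ((2*(L^2-a^2)/((L^2+a^2)^2) : ℝ) : ℂ) := by
  have h1 := ne_zero_of_im L a ha
  have h2 := ne_zero_of_im' L a ha
  have h3 : ((L^2+a^2 : ℝ):ℂ) ≠ 0 := Complex.ofReal_ne_zero.mpr (by positivity)
  have h1' := pow_ne_zero 2 h1
  have h2' := pow_ne_zero 2 h2
  rw [div_add_div _ _ h1' h2', Complex.ofReal_div, div_eq_div_iff (mul_ne_zero h1' h2') (Complex.ofReal_ne_zero.mpr (by positivity))]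
  push_cast
  linear_combination ((-2*((L:ℂ)^2-(a:ℂ)^2)*(a:ℂ)^4)*Complex.I^2 + 2*(L:ℂ)^2*((L:ℂ)^2+(a:ℂ)^2)^2 - 2*(L:ℂ)^4*((L:ℂ)^2-(a:ℂ)^2)) * Complex.I_sq

lemma sum_pairs (s : Finset ℤ) (f : ℤ → ℂ) :
    (∑ n ∈ s, f n)^2 - 2 * ∑ p ∈ (s ×ˢ s).filter (fun p => p.1 < p.2), f p.1 * f p.2
      = ∑ n ∈ s, (f n)^2 := by
  have hsq : (∑ n ∈ s, f n)^2 = ∑ p ∈ s ×ˢ s, f p.1 * f p.2 := by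
    rw [sq, Finset.sum_mul_sum, ← Finset.sum_product']
  have hsplit := Finset.sum_filter_add_sum_filter_not (s ×ˢ s) (fun p => p.1 < p.2)
    (fun p => f p.1 * f p.2)
  have hsplit2 := Finset.sum_filter_add_sum_filter_not
    ((s ×ˢ s).filter (fun p => ¬ p.1 < p.2)) (fun p => p.2 < p.1)
    (fun p => f p.1 * f p.2)
  have e1 : ((s ×ˢ s).filter (fun p => ¬ p.1 < p.2)).filter (fun p => p.2 < p.1)
      = (s ×ˢ s).filter (fun p => p.2 < p.1) := by
    rw [Finset.filter_filter]
    apply Finset.filter_congr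
    intro p _; constructor
    · rintro ⟨_, h⟩; exact h
    · intro h; exact ⟨by omega, h⟩
  have e2 : ((s ×ˢ s).filter (fun p => ¬ p.1 < p.2)).filter (fun p => ¬ p.2 < p.1)
      = (s ×ˢ s).filter (fun p => p.1 = p.2) := by
    rw [Finset.filter_filter]
    apply Finset.filter_congr
    intro p _
    constructor
    · rintro ⟨h1, h2⟩; omega
    · intro h; omega
  have e3 : ∑ p ∈ (s ×ˢ s).filter (fun p => p.2 < p.1), f p.1 * f p.2
      = ∑ p ∈ (s ×ˢ s).filter (fun p => p.1 < p.2), f p.1 * f p.2 := by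
    apply Finset.sum_nbij' (i := Prod.swap) (j := Prod.swap)
    · intro p hp; simp [Finset.mem_filter, Finset.mem_product] at hp ⊢; tauto
    · intro p hp; simp [Finset.mem_filter, Finset.mem_product] at hp ⊢; tauto
    · intro p _; rfl
    · intro p _; rfl
    · intro p _; simp [mul_comm]
  have e4 : ∑ p ∈ (s ×ˢ s).filter (fun p => p.1 = p.2), f p.1 * f p.2
      = ∑ n ∈ s, (f n)^2 := by
    apply Finset.sum_nbij' (i := fun p => p.1) (j := fun n => (n, n))
    · intro p hp; simp [Finset.mem_filter, Finset.mem_product] at hp ⊢; tauto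
    · intro n hn; simp [Finset.mem_filter, Finset.mem_product, hn]
    · intro p hp; simp [Finset.mem_filter] at hp; ext <;> simp [hp.2]
    · intro p _; rfl
    · intro p hp; simp [Finset.mem_filter] at hp; rw [hp.2]; ring
  rw [e1, e2, e3, e4] at hsplit2
  rw [hsq, ← hsplit, ← hsplit2]
  ring

lemma summable_bound (C : ℝ) (u : ℕ → ℝ) (h : ∀ k, |u k| ≤ C / ((k:ℝ)+1)^2) :
    Summable u := by
  have h1 : Summable (fun n : ℕ => 1/((n:ℝ)+1)^2) := by
    have h0 := Real.summable_one_div_nat_pow.mpr (by norm_num : 1 < 2)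
    have h2 := (summable_nat_add_iff (f := fun n : ℕ => 1/(n:ℝ)^2) 1).mpr h0
    refine h2.congr fun n => ?_
    push_cast; ring
  refine Summable.of_norm_bounded (h1.mul_left C) fun k => ?_
  rw [Real.norm_eq_abs]
  calc |u k| ≤ C/((k:ℝ)+1)^2 := h k
    _ = C * (1/((k:ℝ)+1)^2) := by ring

theorem newton_identity_for_zeros (w : ℝ) (hw : 0 < w) (hw1 : w ≠ 1) :
    ∃ S₁ S₂ Q : ℂ,
      Tendsto (fun N : ℕ => ∑ n ∈ Finset.Icc (-(N : ℤ)) (N : ℤ),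
          1 / ((Real.log w : ℂ) + 2 * (π : ℂ) * Complex.I * (n : ℂ))) atTop (nhds S₁) ∧
      Tendsto (fun N : ℕ => ∑ p ∈ (Finset.Icc (-(N : ℤ)) (N : ℤ) ×ˢ
            Finset.Icc (-(N : ℤ)) (N : ℤ)).filter (fun p => p.1 < p.2),
          1 / (((Real.log w : ℂ) + 2 * (π : ℂ) * Complex.I * (p.1 : ℂ)) *
            ((Real.log w : ℂ) + 2 * (π : ℂ) * Complex.I * (p.2 : ℂ)))) atTop (nhds S₂) ∧
      Tendsto (fun N : ℕ => ∑ n ∈ Finset.Icc (-(N : ℤ)) (N : ℤ),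
          1 / ((Real.log w : ℂ) + 2 * (π : ℂ) * Complex.I * (n : ℂ)) ^ 2) atTop (nhds Q) ∧
      S₁ ^ 2 - 2 * S₂ = Q ∧
      Q = 1 / ((Real.log w : ℂ)) ^ 2 + 2 * ((∑' n : ℕ,
        ((Real.log w) ^ 2 - 4 * π ^ 2 * ((n : ℝ) + 1) ^ 2) /
          ((Real.log w) ^ 2 + 4 * π ^ 2 * ((n : ℝ) + 1) ^ 2) ^ 2 : ℝ) : ℂ) := by
  have hL : Real.log w ≠ 0 := by
    simp only [Ne, Real.log_eq_zero]
    push_neg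
    exact ⟨hw.ne', hw1, by linarith⟩
  set L : ℝ := Real.log w with hLdef
  set F : ℤ → ℂ := fun n => 1 / ((L : ℂ) + 2 * (π : ℂ) * Complex.I * (n : ℂ)) with hF
  set G : ℤ → ℂ := fun n => 1 / ((L : ℂ) + 2 * (π : ℂ) * Complex.I * (n : ℂ)) ^ 2 with hG
  set a : ℕ → ℝ := fun k => 2 * π * ((k:ℝ)+1) with ha
  have hapos : ∀ k, 0 < a k := fun k => by
    have := Real.pi_pos; positivity
  have hane : ∀ k, a k ≠ 0 := fun k => (hapos k).ne'
  have hD : ∀ k : ℕ, ((k:ℝ)+1)^2 ≤ L^2 + a k ^ 2 := by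
    intro k
    have hπ := Real.pi_gt_three
    have hk : (0:ℝ) ≤ (k:ℝ) := Nat.cast_nonneg k
    have h1 : ((k:ℝ)+1)^2 ≤ a k ^ 2 := by
      have : (k:ℝ)+1 ≤ a k := by
        simp only [ha]; nlinarith
      nlinarith
    nlinarith [sq_nonneg L]
  have hDpos : ∀ k, (0:ℝ) < L^2 + a k ^ 2 := fun k =>
    lt_of_lt_of_le (by positivity) (hD k)
  -- rewriting the pair terms
  have hzpos : ∀ k : ℕ, ((L:ℂ) + 2 * (π : ℂ) * Complex.I * (((k:ℤ)+1 : ℤ) : ℂ))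
      = (L:ℂ) + (a k : ℝ) * Complex.I := by
    intro k; simp only [ha]; push_cast; ring
  have hzneg : ∀ k : ℕ, ((L:ℂ) + 2 * (π : ℂ) * Complex.I * ((-((k:ℤ)+1) : ℤ) : ℂ))
      = (L:ℂ) - (a k : ℝ) * Complex.I := by
    intro k; simp only [ha]; push_cast; ring
  -- the symmetric-pair sequences
  set gr : ℕ → ℝ := fun k => 2*L/(L^2 + a k ^2) with hgr
  set hr : ℕ → ℝ := fun k => 2*(L^2 - a k ^2)/((L^2 + a k ^2)^2) with hhr
  have hgval : ∀ k : ℕ, F ((k:ℤ)+1) + F (-((k:ℤ)+1)) = ((gr k : ℝ) : ℂ) := by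
    intro k
    simp only [hF, hgr]
    rw [hzpos k, hzneg k, pair_sum L (a k) (hane k)]
  have hhval : ∀ k : ℕ, G ((k:ℤ)+1) + G (-((k:ℤ)+1)) = ((hr k : ℝ) : ℂ) := by
    intro k
    simp only [hG, hhr]
    rw [hzpos k, hzneg k, pair_sq_sum L (a k) (hane k)]
  -- summability
  have hgrsum : Summable gr := by
    apply summable_bound (2*|L|)
    intro k
    rw [hgr, abs_div, abs_of_pos (hDpos k), div_le_div_iff₀ (hDpos k) (by positivity)]
    have h1 := hD k
    have h2 : |2*L| = 2*|L| := by rw [abs_mul, _root_.abs_two]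
    nlinarith [abs_nonneg L, le_abs_self (2*L), neg_abs_le (2*L), sq_nonneg ((k:ℝ)+1)]
  have hhrsum : Summable hr := by
    apply summable_bound 2
    intro k
    rw [hhr, abs_div, abs_of_pos (by positivity : (0:ℝ) < (L^2 + a k ^2)^2),
      div_le_div_iff₀ (by positivity) (by positivity)]
    have h1 := hD k
    have h2 := hDpos k
    have habs : |2*(L^2 - a k ^2)| ≤ 2*(L^2 + a k ^2) := by
      rcases abs_cases (2*(L^2 - a k ^2)) with ⟨he, _⟩ | ⟨he, _⟩ <;>
        rw [he] <;> nlinarith [sq_nonneg L, sq_nonneg (a k)]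
    have t1 : |2*(L^2 - a k ^2)| * (((k:ℝ)+1)^2) ≤ |2*(L^2 - a k ^2)| * (L^2 + a k ^2) :=
      mul_le_mul_of_nonneg_left h1 (abs_nonneg _)
    have t2 : |2*(L^2 - a k ^2)| * (L^2 + a k ^2) ≤ (2*(L^2 + a k ^2)) * (L^2 + a k ^2) :=
      mul_le_mul_of_nonneg_right habs h2.le
    nlinarith [t1, t2]
  have hgsum : Summable (fun k : ℕ => F ((k:ℤ)+1) + F (-((k:ℤ)+1))) := by
    refine (Complex.summable_ofReal.mpr hgrsum).congr fun k => (hgval k).symm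
  have hhsum : Summable (fun k : ℕ => G ((k:ℤ)+1) + G (-((k:ℤ)+1))) := by
    refine (Complex.summable_ofReal.mpr hhrsum).congr fun k => (hhval k).symm
  -- the limits
  refine ⟨F 0 + ∑' k : ℕ, (F ((k:ℤ)+1) + F (-((k:ℤ)+1))),
    ((F 0 + ∑' k : ℕ, (F ((k:ℤ)+1) + F (-((k:ℤ)+1))))^2
      - (G 0 + ∑' k : ℕ, (G ((k:ℤ)+1) + G (-((k:ℤ)+1)))))/2,
    G 0 + ∑' k : ℕ, (G ((k:ℤ)+1) + G (-((k:ℤ)+1))), ?_, ?_, ?_, by ring, ?_⟩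
  · exact (Tendsto.const_add (F 0) hgsum.hasSum.tendsto_sum_nat).congr
      fun N => (sum_Icc_eq F N).symm
  · have hA : Tendsto (fun N : ℕ => ∑ n ∈ Finset.Icc (-(N:ℤ)) (N:ℤ), F n) atTop
        (nhds (F 0 + ∑' k : ℕ, (F ((k:ℤ)+1) + F (-((k:ℤ)+1))))) :=
      (Tendsto.const_add (F 0) hgsum.hasSum.tendsto_sum_nat).congr
        fun N => (sum_Icc_eq F N).symm
    have hQ : Tendsto (fun N : ℕ => ∑ n ∈ Finset.Icc (-(N:ℤ)) (N:ℤ), G n) atTop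
        (nhds (G 0 + ∑' k : ℕ, (G ((k:ℤ)+1) + G (-((k:ℤ)+1))))) :=
      (Tendsto.const_add (G 0) hhsum.hasSum.tendsto_sum_nat).congr
        fun N => (sum_Icc_eq G N).symm
    refine (((hA.pow 2).sub hQ).div_const 2).congr fun N => ?_
    have hsp := sum_pairs (Finset.Icc (-(N:ℤ)) (N:ℤ)) F
    have hGF : ∑ n ∈ Finset.Icc (-(N:ℤ)) (N:ℤ), (F n)^2
        = ∑ n ∈ Finset.Icc (-(N:ℤ)) (N:ℤ), G n := by
      refine Finset.sum_congr rfl fun n _ => ?_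
      simp only [hF, hG, one_div_pow]
    rw [hGF] at hsp
    have hterm : ∀ p : ℤ × ℤ,
        1 / (((L:ℂ) + 2 * (π:ℂ) * Complex.I * (p.1:ℂ)) *
          ((L:ℂ) + 2 * (π:ℂ) * Complex.I * (p.2:ℂ))) = F p.1 * F p.2 := by
      intro p; simp only [hF]; rw [div_mul_div_comm, one_mul]
    rw [Finset.sum_congr rfl fun p _ => hterm p]
    linear_combination ((1:ℂ)/2) * hsp
  · exact (Tendsto.const_add (G 0) hhsum.hasSum.tendsto_sum_nat).congr
      fun N => (sum_Icc_eq G N).symm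
  · have hG0 : G 0 = 1/((L:ℂ))^2 := by simp [hG]
    rw [hG0]
    congr 1
    have : (∑' k : ℕ, (G ((k:ℤ)+1) + G (-((k:ℤ)+1)))) = ∑' k : ℕ, ((hr k : ℝ) : ℂ) :=
      tsum_congr hhval
    rw [this, ← Complex.ofReal_tsum]
    have hreq : (∑' k : ℕ, hr k)
        = 2 * ∑' n : ℕ, (L^2 - 4*π^2*((n:ℝ)+1)^2)/((L^2 + 4*π^2*((n:ℝ)+1)^2)^2) := by
      rw [← tsum_mul_left]
      refine tsum_congr fun k => ?_
      simp only [hhr, ha]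
      ring
    rw [hreq]
    push_cast
    ring
end
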